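/- Let R be a commutative ring with 1, let M be an R-module, and let n ≥ 3. There is a well-defined R-linear map i : Sym²(⋀²M) ⊗ Sym²(Sym^{n−2}M) → Sym²(Sym^n M) determined by i(((x₁∧y₁)·(x₂∧y₂)) ⊗ ((a₁·⋯·a_{n−2})·(b₁·⋯·b_{n−2}))) = (x₁·y₂·a₁·⋯·a_{n−2})·(x₂·y₁·b₁·⋯·b_{n−2}) + (x₂·y₁·a₁·⋯·a_{n−2})·(x₁·y₂·b₁·⋯·b_{n−2}) − (x₁·x₂·a₁·⋯·a_{n−2})·(y₁·y₂·b₁·⋯·b_{n−2}) − (y₁·y₂·a₁·⋯·a_{n−2})·(x₁·x₂·b₁·⋯·b_{n−2}) for all x₁,y₁,x₂,y₂,a_j,b_j ∈ M, and the composite q ∘ i is the zero map, where q : Sym²(Sym^n M) → Sym^{2n} M is the canonical surjection induced by the identity of M^{⊗2n}. -/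

import Mathlib

open scoped TensorProduct

/-- The submodule of relations defining the symmetric power: differences of pure tensors
related by a permutation of the factors. -/
def symRel (R : Type*) [CommRing R] (n : ℕ) (M : Type*) [AddCommGroup M] [Module R M] :
    Submodule R (⨂[R]^n M) :=
  Submodule.span R {x | ∃ (σ : Equiv.Perm (Fin n)) (v : Fin n → M),
    x = PiTensorProduct.tprod R v - PiTensorProduct.tprod R (v ∘ σ)}

/-- The `n`-th symmetric power of the `R`-module `M`: the quotient of the `n`-fold tensor
power by the permutation action of the symmetric group. -/
def SymPow (R : Type*) [CommRing R] (n : ℕ) (M : Type*) [AddCommGroup M] [Module R M] :=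
  (⨂[R]^n M) ⧸ symRel R n M

noncomputable instance (R : Type*) [CommRing R] (n : ℕ) (M : Type*) [AddCommGroup M] [Module R M] :
    AddCommGroup (SymPow R n M) :=
  inferInstanceAs (AddCommGroup ((⨂[R]^n M) ⧸ symRel R n M))

noncomputable instance (R : Type*) [CommRing R] (n : ℕ) (M : Type*) [AddCommGroup M] [Module R M] :
    Module R (SymPow R n M) :=
  inferInstanceAs (Module R ((⨂[R]^n M) ⧸ symRel R n M))

/-- The canonical quotient map from the tensor power to the symmetric power. -/
noncomputable def SymPow.mk (R : Type*) [CommRing R] (n : ℕ) (M : Type*) [AddCommGroup M] [Module R M] :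
    (⨂[R]^n M) →ₗ[R] SymPow R n M :=
  (symRel R n M).mkQ

/-- The product `v 0 · v 1 · ⋯ · v (n-1)` in the symmetric power `SymPow R n M`. -/
noncomputable def SymPow.prod (R : Type*) [CommRing R] {n : ℕ} {M : Type*} [AddCommGroup M] [Module R M]
    (v : Fin n → M) : SymPow R n M :=
  SymPow.mk R n M (PiTensorProduct.tprod R v)

/-- The wedge `v 0 ∧ v 1 ∧ ⋯ ∧ v (n-1)`, as an element of the `n`-th exterior power
`⋀[R]^n M`. -/
noncomputable def wedgeMk (R : Type*) [CommRing R] {n : ℕ} {M : Type*} [AddCommGroup M] [Module R M]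
    (v : Fin n → M) : ⋀[R]^n M :=
  ⟨ExteriorAlgebra.ιMulti R n v, ExteriorAlgebra.ιMulti_range R n (Set.mem_range_self v)⟩

section Aux

variable {R : Type*} [CommRing R] {M N P : Type*} [AddCommGroup M] [Module R M]
  [AddCommGroup N] [Module R N] [AddCommGroup P] [Module R P]

namespace SymPow

noncomputable def prodML (R : Type*) [CommRing R] (n : ℕ) (M : Type*) [AddCommGroup M]
    [Module R M] : MultilinearMap R (fun _ : Fin n => M) (SymPow R n M) :=
  (SymPow.mk R n M).compMultilinearMap (PiTensorProduct.tprod R)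

lemma prod_eq {n : ℕ} (v : Fin n → M) : SymPow.prod R v = prodML R n M v := rfl

lemma prod_comp_perm {n : ℕ} (v : Fin n → M) (σ : Equiv.Perm (Fin n)) :
    SymPow.prod R (v ∘ σ) = SymPow.prod R v := by
  symm
  refine (Submodule.Quotient.eq _).mpr ?_
  exact Submodule.subset_span ⟨σ, v, rfl⟩

lemma hom_ext {n : ℕ} {f g : SymPow R n M →ₗ[R] P}
    (h : ∀ v : Fin n → M, f (SymPow.prod R v) = g (SymPow.prod R v)) : f = g := by
  apply Submodule.linearMap_qext
  apply PiTensorProduct.ext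
  ext v
  exact h v

noncomputable def lift {n : ℕ} (f : MultilinearMap R (fun _ : Fin n => M) P)
    (hf : ∀ (v : Fin n → M) (σ : Equiv.Perm (Fin n)), f (v ∘ σ) = f v) :
    SymPow R n M →ₗ[R] P :=
  Submodule.liftQ _ (PiTensorProduct.lift f) (by
    rw [symRel, Submodule.span_le]
    rintro x ⟨σ, v, rfl⟩
    simp only [SetLike.mem_coe, LinearMap.mem_ker, map_sub, PiTensorProduct.lift.tprod, hf,
      sub_self])

@[simp] lemma lift_prod {n : ℕ} (f : MultilinearMap R (fun _ : Fin n => M) P)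
    (hf : ∀ (v : Fin n → M) (σ : Equiv.Perm (Fin n)), f (v ∘ σ) = f v) (v : Fin n → M) :
    lift f hf (SymPow.prod R v) = f v := by
  exact (Submodule.liftQ_apply _ (PiTensorProduct.lift f) _).trans
    (PiTensorProduct.lift.tprod v)

end SymPow

end Aux
section Aux2

variable {R : Type*} [CommRing R] {M N P : Type*} [AddCommGroup M] [Module R M]
  [AddCommGroup N] [Module R N] [AddCommGroup P] [Module R P]

namespace SymPow

lemma update_pair_zero (x y z : N) : Function.update ![x, y] 0 z = ![z, y] := by
  funext i
  fin_cases i <;> simp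

lemma update_pair_one (x y z : N) : Function.update ![x, y] 1 z = ![x, z] := by
  funext i
  fin_cases i <;> simp

lemma prod_pair_add_left (x x' y : N) :
    SymPow.prod R ![x + x', y] = SymPow.prod R ![x, y] + SymPow.prod R ![x', y] := by
  simp only [prod_eq]
  calc prodML R 2 N ![x + x', y] = prodML R 2 N (Function.update ![x, y] 0 (x + x')) := by
        rw [update_pair_zero]
    _ = prodML R 2 N (Function.update ![x, y] 0 x) + prodML R 2 N (Function.update ![x, y] 0 x') :=
        (prodML R 2 N).map_update_add _ _ _ _
    _ = _ := by rw [update_pair_zero, update_pair_zero]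

lemma prod_pair_smul_left (r : R) (x y : N) :
    SymPow.prod R ![r • x, y] = r • SymPow.prod R ![x, y] := by
  simp only [prod_eq]
  calc prodML R 2 N ![r • x, y] = prodML R 2 N (Function.update ![x, y] 0 (r • x)) := by
        rw [update_pair_zero]
    _ = r • prodML R 2 N (Function.update ![x, y] 0 x) := (prodML R 2 N).map_update_smul _ _ _ _
    _ = _ := by rw [update_pair_zero]

lemma prod_pair_add_right (x y y' : N) :
    SymPow.prod R ![x, y + y'] = SymPow.prod R ![x, y] + SymPow.prod R ![x, y'] := by
  simp only [prod_eq]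
  calc prodML R 2 N ![x, y + y'] = prodML R 2 N (Function.update ![x, y] 1 (y + y')) := by
        rw [update_pair_one]
    _ = prodML R 2 N (Function.update ![x, y] 1 y) + prodML R 2 N (Function.update ![x, y] 1 y') :=
        (prodML R 2 N).map_update_add _ _ _ _
    _ = _ := by rw [update_pair_one, update_pair_one]

lemma prod_pair_smul_right (r : R) (x y : N) :
    SymPow.prod R ![x, r • y] = r • SymPow.prod R ![x, y] := by
  simp only [prod_eq]
  calc prodML R 2 N ![x, r • y] = prodML R 2 N (Function.update ![x, y] 1 (r • y)) := by
        rw [update_pair_one]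
    _ = r • prodML R 2 N (Function.update ![x, y] 1 y) := (prodML R 2 N).map_update_smul _ _ _ _
    _ = _ := by rw [update_pair_one]

lemma prod_pair_comm (x y : N) : SymPow.prod R ![x, y] = SymPow.prod R ![y, x] := by
  have h : ![x, y] = ![y, x] ∘ (Equiv.swap (0 : Fin 2) 1) := by
    funext i
    fin_cases i <;> simp [Equiv.swap_apply_def]
  rw [h, prod_comp_perm]

/-- Multiplication `N → N → Sym² N` as a bilinear map. -/
noncomputable def mul₂ : N →ₗ[R] N →ₗ[R] SymPow R 2 N :=
  LinearMap.mk₂ R (fun x y => SymPow.prod R ![x, y])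
    prod_pair_add_left prod_pair_smul_left prod_pair_add_right prod_pair_smul_right

@[simp] lemma mul₂_apply (x y : N) : (mul₂ x y : SymPow R 2 N) = SymPow.prod R ![x, y] := rfl

lemma mul₂_comm (x y : N) : (mul₂ x y : SymPow R 2 N) = mul₂ y x := prod_pair_comm x y

lemma pair_eq (v : Fin 2 → N) : v = ![v 0, v 1] := by
  funext i; fin_cases i <;> rfl

lemma hom_ext₂ {f g : SymPow R 2 N →ₗ[R] P}
    (h : ∀ x y : N, f (mul₂ x y) = g (mul₂ x y)) : f = g := by
  apply hom_ext
  intro v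
  rw [pair_eq v]
  exact h (v 0) (v 1)

/-- A symmetric bilinear map as a multilinear map on `Fin 2`. -/
def toML₂ (b : N →ₗ[R] N →ₗ[R] P) : MultilinearMap R (fun _ : Fin 2 => N) P where
  toFun v := b (v 0) (v 1)
  map_update_add' {_} v i x y := by
    fin_cases i <;>
      simp [Function.update_self, Function.update_of_ne, Fin.ext_iff]
  map_update_smul' {_} v i r x := by
    fin_cases i <;>
      simp [Function.update_self, Function.update_of_ne, Fin.ext_iff]

lemma fin_two_cases (j : Fin 2) : j = 0 ∨ j = 1 := by omega

noncomputable def lift₂ (b : N →ₗ[R] N →ₗ[R] P) (hb : ∀ x y, b x y = b y x) :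
    SymPow R 2 N →ₗ[R] P :=
  lift (toML₂ b) (by
    intro v σ
    show b ((v ∘ σ) 0) ((v ∘ σ) 1) = b (v 0) (v 1)
    simp only [Function.comp_apply]
    have hne : σ 0 ≠ σ 1 := fun hc => absurd (σ.injective hc) (by decide)
    rcases fin_two_cases (σ 0) with h0 | h0 <;> rcases fin_two_cases (σ 1) with h1 | h1 <;>
      rw [h0, h1] at hne ⊢ <;>
      first
        | exact absurd rfl hne
        | rfl
        | exact hb _ _)

@[simp] lemma lift₂_mul₂ (b : N →ₗ[R] N →ₗ[R] P) (hb : ∀ x y, b x y = b y x) (x y : N) :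
    lift₂ b hb (mul₂ x y) = b x y := by
  rw [mul₂_apply, lift₂, lift_prod]
  show b (![x, y] 0) (![x, y] 1) = b x y
  rfl

end SymPow

end Aux2
section Aux3

variable {R : Type*} [CommRing R] {M P : Type*} [AddCommGroup M] [Module R M]
  [AddCommGroup P] [Module R P]

namespace SymPow


lemma cons_eq_update {k : ℕ} (u z : M) (w : Fin k → M) :
    (Fin.cons z w : Fin (k + 1) → M) = Function.update (Fin.cons u w) 0 z := by
  funext i
  induction i using Fin.cases with
  | zero => simp
  | succ j => simp [Function.update_of_ne (Fin.succ_ne_zero j)]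

lemma prod_cons_add_fst {k : ℕ} (u u' : M) (w : Fin k → M) :
    SymPow.prod R (Fin.cons (u + u') w) =
      SymPow.prod R (Fin.cons u w) + SymPow.prod R (Fin.cons u' w) := by
  simp only [prod_eq]
  rw [cons_eq_update u (u + u') w, (prodML R (k+1) M).map_update_add,
    ← cons_eq_update u u w, ← cons_eq_update u u' w]

lemma prod_cons_smul_fst {k : ℕ} (r : R) (u : M) (w : Fin k → M) :
    SymPow.prod R (Fin.cons (r • u) w) = r • SymPow.prod R (Fin.cons u w) := by
  simp only [prod_eq]
  rw [cons_eq_update u (r • u) w, (prodML R (k+1) M).map_update_smul, ← cons_eq_update u u w]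

lemma cons_cons_eq_update {k : ℕ} (u v z : M) (w : Fin k → M) :
    (Fin.cons u (Fin.cons z w) : Fin (k + 2) → M) =
      Function.update (Fin.cons u (Fin.cons v w)) 1 z := by
  funext i
  induction i using Fin.cases with
  | zero => simp [Function.update_of_ne]
  | succ j =>
      rw [show (Fin.succ j : Fin (k + 2)) = Fin.succ j from rfl]
      rw [show (1 : Fin (k+2)) = Fin.succ 0 from rfl, ← Fin.cons_update]
      induction j using Fin.cases with
      | zero => simp
      | succ l => simp [Function.update_of_ne (Fin.succ_ne_zero l)]

lemma prod_cons_add_snd {k : ℕ} (u v v' : M) (w : Fin k → M) :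
    SymPow.prod R (Fin.cons u (Fin.cons (v + v') w)) =
      SymPow.prod R (Fin.cons u (Fin.cons v w)) +
        SymPow.prod R (Fin.cons u (Fin.cons v' w)) := by
  simp only [prod_eq]
  rw [cons_cons_eq_update u v (v + v') w, (prodML R (k+2) M).map_update_add,
    ← cons_cons_eq_update u v v w, ← cons_cons_eq_update u v v' w]

lemma prod_cons_smul_snd {k : ℕ} (r : R) (u v : M) (w : Fin k → M) :
    SymPow.prod R (Fin.cons u (Fin.cons (r • v) w)) =
      r • SymPow.prod R (Fin.cons u (Fin.cons v w)) := by
  simp only [prod_eq]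
  rw [cons_cons_eq_update u v (r • v) w, (prodML R (k+2) M).map_update_smul,
    ← cons_cons_eq_update u v v w]

lemma prod_cons_cons_comm {k : ℕ} (u v : M) (w : Fin k → M) :
    SymPow.prod R (Fin.cons u (Fin.cons v w)) = SymPow.prod R (Fin.cons v (Fin.cons u w)) := by
  have h : (Fin.cons v (Fin.cons u w) : Fin (k + 2) → M) =
      (Fin.cons u (Fin.cons v w)) ∘ (Equiv.swap 0 1) := by
    funext i
    induction i using Fin.cases with
    | zero => simp [Equiv.swap_apply_left]
    | succ j =>
        induction j using Fin.cases with
        | zero =>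
            have h1 : (Equiv.swap (0 : Fin (k+2)) 1) (Fin.succ 0) = 0 := by
              rw [show (Fin.succ 0 : Fin (k+2)) = 1 from rfl, Equiv.swap_apply_right]
            rw [Function.comp_apply, h1]
            simp
        | succ l =>
            have h1 : (Equiv.swap (0 : Fin (k+2)) 1) l.succ.succ = l.succ.succ :=
              Equiv.swap_apply_of_ne_of_ne (by simp [Fin.ext_iff])
                (by simp [Fin.ext_iff])
            rw [Function.comp_apply, h1]
            simp
  conv_rhs => rw [h]
  rw [prod_comp_perm]

/-- Extension of a permutation of `Fin k` to `Fin (k+1)` fixing `0`. -/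
def ext1 {k : ℕ} (σ : Equiv.Perm (Fin k)) : Equiv.Perm (Fin (k + 1)) :=
  Equiv.Perm.decomposeFin.symm (0, σ)

lemma cons_comp_ext1 {k : ℕ} (u : M) (w : Fin k → M) (σ : Equiv.Perm (Fin k)) :
    (Fin.cons u w) ∘ (ext1 σ) = Fin.cons u (w ∘ σ) := by
  funext i
  induction i using Fin.cases with
  | zero =>
      simp [ext1, Equiv.Perm.decomposeFin_symm_apply_zero]
  | succ j =>
      simp [ext1, Equiv.Perm.decomposeFin_symm_apply_succ]

variable (R M) in
/-- The multilinear map `a ↦ u · v · a 0 · ⋯ · a (m-1)`. -/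
noncomputable def consML (m : ℕ) (u v : M) :
    MultilinearMap R (fun _ : Fin m => M) (SymPow R (m + 2) M) :=
  ((prodML R (m + 2) M).curryLeft u).curryLeft v

lemma consML_apply (m : ℕ) (u v : M) (a : Fin m → M) :
    consML R M m u v a = SymPow.prod R (Fin.cons u (Fin.cons v a)) := rfl

variable (R M) in
/-- The linear map `Sym^m M → Sym^(m+2) M` of multiplication by `u` and `v`,
as a function of `u`, `v`. -/
noncomputable def mulCf (m : ℕ) (u v : M) : SymPow R m M →ₗ[R] SymPow R (m + 2) M :=
  lift (consML R M m u v) (by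
    intro a σ
    rw [consML_apply, consML_apply, ← cons_comp_ext1, ← cons_comp_ext1, prod_comp_perm])

@[simp] lemma mulCf_prod (m : ℕ) (u v : M) (a : Fin m → M) :
    mulCf R M m u v (SymPow.prod R a) = SymPow.prod R (Fin.cons u (Fin.cons v a)) := by
  rw [mulCf, lift_prod, consML_apply]

variable (R M) in
/-- Multiplication by two module elements, as a bilinear map into linear maps. -/
noncomputable def mulC (m : ℕ) : M →ₗ[R] M →ₗ[R] (SymPow R m M →ₗ[R] SymPow R (m + 2) M) :=
  LinearMap.mk₂ R (mulCf R M m)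
    (fun u u' v => hom_ext fun a => by
      simp [prod_cons_add_fst])
    (fun r u v => hom_ext fun a => by
      simp [prod_cons_smul_fst])
    (fun u v v' => hom_ext fun a => by
      simp [prod_cons_add_snd])
    (fun r u v => hom_ext fun a => by
      simp [prod_cons_smul_snd])

@[simp] lemma mulC_prod (m : ℕ) (u v : M) (a : Fin m → M) :
    mulC R M m u v (SymPow.prod R a) = SymPow.prod R (Fin.cons u (Fin.cons v a)) :=
  mulCf_prod m u v a

lemma mulC_comm (m : ℕ) (u v : M) : mulC R M m u v = mulC R M m v u :=
  hom_ext fun a => by simp [prod_cons_cons_comm]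

end SymPow

end Aux3
section Aux4

variable {R : Type*} [CommRing R] {M : Type*} [AddCommGroup M] [Module R M]

open SymPow

variable (R M) in
/-- `(f, g) ↦ ((p, q) ↦ (f p) · (g q))`. -/
noncomputable def pcomb (m : ℕ) (f g : SymPow R m M →ₗ[R] SymPow R (m + 2) M) :
    SymPow R m M →ₗ[R] SymPow R m M →ₗ[R] SymPow R 2 (SymPow R (m + 2) M) :=
  ((mul₂ (R := R) (N := SymPow R (m + 2) M)).comp f).compl₂ g

lemma pcomb_apply (m : ℕ) (f g : SymPow R m M →ₗ[R] SymPow R (m + 2) M)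
    (p q : SymPow R m M) : pcomb R M m f g p q = mul₂ (f p) (g q) := rfl

variable (R M) in
/-- The symmetric bilinear map underlying `Φ x₁ y₁ x₂ y₂`. -/
noncomputable def Bmap (m : ℕ) (x₁ y₁ x₂ y₂ : M) :
    SymPow R m M →ₗ[R] SymPow R m M →ₗ[R] SymPow R 2 (SymPow R (m + 2) M) :=
  pcomb R M m (mulC R M m x₁ y₂) (mulC R M m x₂ y₁)
    + pcomb R M m (mulC R M m x₂ y₁) (mulC R M m x₁ y₂)
    - pcomb R M m (mulC R M m x₁ x₂) (mulC R M m y₁ y₂)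
    - pcomb R M m (mulC R M m y₁ y₂) (mulC R M m x₁ x₂)

lemma Bmap_apply (m : ℕ) (x₁ y₁ x₂ y₂ : M) (p q : SymPow R m M) :
    Bmap R M m x₁ y₁ x₂ y₂ p q =
      mul₂ (mulC R M m x₁ y₂ p) (mulC R M m x₂ y₁ q)
        + mul₂ (mulC R M m x₂ y₁ p) (mulC R M m x₁ y₂ q)
        - mul₂ (mulC R M m x₁ x₂ p) (mulC R M m y₁ y₂ q)
        - mul₂ (mulC R M m y₁ y₂ p) (mulC R M m x₁ x₂ q) := by
  simp [Bmap, pcomb_apply, LinearMap.add_apply, LinearMap.sub_apply]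

lemma Bmap_symm (m : ℕ) (x₁ y₁ x₂ y₂ : M) (p q : SymPow R m M) :
    Bmap R M m x₁ y₁ x₂ y₂ p q = Bmap R M m x₁ y₁ x₂ y₂ q p := by
  rw [Bmap_apply, Bmap_apply, mul₂_comm (mulC R M m x₁ y₂ p),
    mul₂_comm (mulC R M m x₂ y₁ p), mul₂_comm (mulC R M m x₁ x₂ p),
    mul₂_comm (mulC R M m y₁ y₂ p)]
  abel

variable (R M) in
/-- The map `Sym²(Sym^m M) → Sym²(Sym^(m+2) M)` determined by `x₁, y₁, x₂, y₂`. -/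
noncomputable def Phi (m : ℕ) (x₁ y₁ x₂ y₂ : M) :
    SymPow R 2 (SymPow R m M) →ₗ[R] SymPow R 2 (SymPow R (m + 2) M) :=
  lift₂ (Bmap R M m x₁ y₁ x₂ y₂) (Bmap_symm m x₁ y₁ x₂ y₂)

@[simp] lemma Phi_mul₂ (m : ℕ) (x₁ y₁ x₂ y₂ : M) (p q : SymPow R m M) :
    Phi R M m x₁ y₁ x₂ y₂ (mul₂ p q) = Bmap R M m x₁ y₁ x₂ y₂ p q :=
  lift₂_mul₂ _ _ _ _

lemma Phi_add1 (m : ℕ) (x₁ x₁' y₁ x₂ y₂ : M) :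
    Phi R M m (x₁ + x₁') y₁ x₂ y₂ = Phi R M m x₁ y₁ x₂ y₂ + Phi R M m x₁' y₁ x₂ y₂ :=
  hom_ext₂ fun p q => by
    simp only [Phi_mul₂, LinearMap.add_apply, Bmap_apply, map_add]
    abel

lemma Phi_smul1 (m : ℕ) (r : R) (x₁ y₁ x₂ y₂ : M) :
    Phi R M m (r • x₁) y₁ x₂ y₂ = r • Phi R M m x₁ y₁ x₂ y₂ :=
  hom_ext₂ fun p q => by
    simp only [Phi_mul₂, LinearMap.smul_apply, Bmap_apply, map_smul, smul_add, smul_sub]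

lemma Phi_add2 (m : ℕ) (x₁ y₁ y₁' x₂ y₂ : M) :
    Phi R M m x₁ (y₁ + y₁') x₂ y₂ = Phi R M m x₁ y₁ x₂ y₂ + Phi R M m x₁ y₁' x₂ y₂ :=
  hom_ext₂ fun p q => by
    simp only [Phi_mul₂, LinearMap.add_apply, Bmap_apply, map_add, LinearMap.add_apply]
    abel

lemma Phi_smul2 (m : ℕ) (r : R) (x₁ y₁ x₂ y₂ : M) :
    Phi R M m x₁ (r • y₁) x₂ y₂ = r • Phi R M m x₁ y₁ x₂ y₂ :=
  hom_ext₂ fun p q => by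
    simp only [Phi_mul₂, LinearMap.smul_apply, Bmap_apply, map_smul, LinearMap.smul_apply,
      smul_add, smul_sub]

lemma Phi_add3 (m : ℕ) (x₁ y₁ x₂ x₂' y₂ : M) :
    Phi R M m x₁ y₁ (x₂ + x₂') y₂ = Phi R M m x₁ y₁ x₂ y₂ + Phi R M m x₁ y₁ x₂' y₂ :=
  hom_ext₂ fun p q => by
    simp only [Phi_mul₂, LinearMap.add_apply, Bmap_apply, map_add, LinearMap.add_apply]
    abel

lemma Phi_smul3 (m : ℕ) (r : R) (x₁ y₁ x₂ y₂ : M) :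
    Phi R M m x₁ y₁ (r • x₂) y₂ = r • Phi R M m x₁ y₁ x₂ y₂ :=
  hom_ext₂ fun p q => by
    simp only [Phi_mul₂, LinearMap.smul_apply, Bmap_apply, map_smul, LinearMap.smul_apply,
      smul_add, smul_sub]

lemma Phi_add4 (m : ℕ) (x₁ y₁ x₂ y₂ y₂' : M) :
    Phi R M m x₁ y₁ x₂ (y₂ + y₂') = Phi R M m x₁ y₁ x₂ y₂ + Phi R M m x₁ y₁ x₂ y₂' :=
  hom_ext₂ fun p q => by
    simp only [Phi_mul₂, LinearMap.add_apply, Bmap_apply, map_add, LinearMap.add_apply]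
    abel

lemma Phi_smul4 (m : ℕ) (r : R) (x₁ y₁ x₂ y₂ : M) :
    Phi R M m x₁ y₁ x₂ (r • y₂) = r • Phi R M m x₁ y₁ x₂ y₂ :=
  hom_ext₂ fun p q => by
    simp only [Phi_mul₂, LinearMap.smul_apply, Bmap_apply, map_smul, LinearMap.smul_apply,
      smul_add, smul_sub]

lemma Phi_alt_right (m : ℕ) (x₁ y₁ z : M) : Phi R M m x₁ y₁ z z = 0 :=
  hom_ext₂ fun p q => by
    simp only [Phi_mul₂, Bmap_apply, LinearMap.zero_apply]
    rw [mulC_comm m z y₁]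
    abel

lemma Phi_alt_left (m : ℕ) (z x₂ y₂ : M) : Phi R M m z z x₂ y₂ = 0 :=
  hom_ext₂ fun p q => by
    simp only [Phi_mul₂, Bmap_apply, LinearMap.zero_apply]
    rw [mulC_comm m z x₂]
    abel

lemma Phi_comm (m : ℕ) (x₁ y₁ x₂ y₂ : M) :
    Phi R M m x₁ y₁ x₂ y₂ = Phi R M m x₂ y₂ x₁ y₁ :=
  hom_ext₂ fun p q => by
    simp only [Phi_mul₂, Bmap_apply]
    rw [mulC_comm m x₂ x₁, mulC_comm m y₂ y₁]
    abel

end Aux4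
section Aux5

variable {R : Type*} [CommRing R] {M Q : Type*} [AddCommGroup M] [Module R M]
  [AddCommGroup Q] [Module R Q]

open SymPow

/-- An alternating map on `Fin 2` from a bilinear-alternating pair function. -/
def altOfPair (f : M → M → Q)
    (hadd1 : ∀ x x' y, f (x + x') y = f x y + f x' y)
    (hsmul1 : ∀ (r : R) x y, f (r • x) y = r • f x y)
    (hadd2 : ∀ x y y', f x (y + y') = f x y + f x y')
    (hsmul2 : ∀ (r : R) x y, f x (r • y) = r • f x y)
    (hdiag : ∀ z, f z z = 0) : M [⋀^Fin 2]→ₗ[R] Q where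
  toFun v := f (v 0) (v 1)
  map_update_add' {_} v i x y := by
    fin_cases i <;>
      simp [Function.update_self, Function.update_of_ne, Fin.ext_iff, hadd1, hadd2]
  map_update_smul' {_} v i r x := by
    fin_cases i <;>
      simp [Function.update_self, Function.update_of_ne, Fin.ext_iff, hsmul1, hsmul2]
  map_eq_zero_of_eq' v i j hv hij := by
    rcases fin_two_cases i with hi | hi <;> rcases fin_two_cases j with hj | hj <;>
        subst hi <;> subst hj
    · exact absurd rfl hij
    · show f (v 0) (v 1) = 0
      rw [hv]; exact hdiag _
    · show f (v 0) (v 1) = 0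
      rw [hv]; exact hdiag _
    · exact absurd rfl hij

@[simp] lemma altOfPair_apply (f : M → M → Q) (h1 h2 h3 h4 h5) (v : Fin 2 → M) :
    altOfPair (R := R) f h1 h2 h3 h4 h5 v = f (v 0) (v 1) := rfl

variable (R) in
/-- Lift of an alternating map on `Fin 2` to the second exterior power. -/
noncomputable def altLift (f : M [⋀^Fin 2]→ₗ[R] Q) : (⋀[R]^2 M) →ₗ[R] Q :=
  (ExteriorAlgebra.liftAlternating
    (Function.update (0 : ∀ i, M [⋀^Fin i]→ₗ[R] Q) 2 f)).comp (Submodule.subtype _)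

@[simp] lemma altLift_wedge (f : M [⋀^Fin 2]→ₗ[R] Q) (v : Fin 2 → M) :
    altLift R f (wedgeMk R v) = f v := by
  rw [altLift, LinearMap.comp_apply,
    show ((Submodule.subtype _) (wedgeMk R v)) = ExteriorAlgebra.ιMulti R 2 v from rfl,
    ExteriorAlgebra.liftAlternating_apply_ιMulti, Function.update_self]

lemma altLift_add (f g : M [⋀^Fin 2]→ₗ[R] Q) :
    altLift R (f + g) = altLift R f + altLift R g := by
  have h : Function.update (0 : ∀ i, M [⋀^Fin i]→ₗ[R] Q) 2 (f + g) =
      Function.update (0 : ∀ i, M [⋀^Fin i]→ₗ[R] Q) 2 f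
        + Function.update (0 : ∀ i, M [⋀^Fin i]→ₗ[R] Q) 2 g := by
    funext i
    by_cases hi : i = 2
    · subst hi; simp
    · simp [Function.update_of_ne hi]
  rw [altLift, h, map_add, LinearMap.add_comp]
  rfl

lemma altLift_smul (r : R) (f : M [⋀^Fin 2]→ₗ[R] Q) :
    altLift R (r • f) = r • altLift R f := by
  have h : Function.update (0 : ∀ i, M [⋀^Fin i]→ₗ[R] Q) 2 (r • f) =
      r • Function.update (0 : ∀ i, M [⋀^Fin i]→ₗ[R] Q) 2 f := by
    funext i
    by_cases hi : i = 2
    · subst hi; simp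
    · simp [Function.update_of_ne hi]
  rw [altLift, h, map_smul, LinearMap.smul_comp]
  rfl

lemma altLift_zero : altLift R (0 : M [⋀^Fin 2]→ₗ[R] Q) = 0 := by
  have h : Function.update (0 : ∀ i, M [⋀^Fin i]→ₗ[R] Q) 2 0
      = (0 : ∀ i, M [⋀^Fin i]→ₗ[R] Q) := by
    funext i
    by_cases hi : i = 2
    · subst hi; simp
    · simp [Function.update_of_ne hi]
  rw [altLift, h, map_zero, LinearMap.zero_comp]

lemma expow_hom_ext {f g : (⋀[R]^2 M) →ₗ[R] Q}
    (h : ∀ v : Fin 2 → M, f (wedgeMk R v) = g (wedgeMk R v)) : f = g := by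
  apply LinearMap.ext
  intro x
  obtain ⟨x, hx⟩ := x
  have hx' : x ∈ Submodule.span R (Set.range (ExteriorAlgebra.ιMulti R 2 (M := M))) := by
    rw [ExteriorAlgebra.ιMulti_span_fixedDegree]; exact hx
  revert hx
  induction hx' using Submodule.span_induction with
  | mem y hy =>
      intro hx
      obtain ⟨v, rfl⟩ := hy
      exact h v
  | zero =>
      intro hx
      rw [show (⟨0, hx⟩ : ⋀[R]^2 M) = 0 from rfl]
      simp
  | add y z hy hz ihy ihz =>
      intro hx
      have hy' : y ∈ (⋀[R]^2 M) := by
        rw [← ExteriorAlgebra.ιMulti_span_fixedDegree]; exact hy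
      have hz' : z ∈ (⋀[R]^2 M) := by
        rw [← ExteriorAlgebra.ιMulti_span_fixedDegree]; exact hz
      rw [show (⟨y + z, hx⟩ : ⋀[R]^2 M) = ⟨y, hy'⟩ + ⟨z, hz'⟩ from rfl, map_add, map_add,
        ihy hy', ihz hz']
  | smul r y hy ihy =>
      intro hx
      have hy' : y ∈ (⋀[R]^2 M) := by
        rw [← ExteriorAlgebra.ιMulti_span_fixedDegree]; exact hy
      rw [show (⟨r • y, hx⟩ : ⋀[R]^2 M) = r • (⟨y, hy'⟩ : ⋀[R]^2 M) from rfl, map_smul, map_smul,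
        ihy hy']

end Aux5
section Aux6

variable {R : Type*} [CommRing R] {M : Type*} [AddCommGroup M] [Module R M]

open SymPow

variable (R M) in
/-- Alternating in the second pair. -/
noncomputable def A1 (m : ℕ) (x₁ y₁ : M) :
    M [⋀^Fin 2]→ₗ[R] (SymPow R 2 (SymPow R m M) →ₗ[R] SymPow R 2 (SymPow R (m + 2) M)) :=
  altOfPair (fun x₂ y₂ => Phi R M m x₁ y₁ x₂ y₂)
    (fun x x' y => Phi_add3 m x₁ y₁ x x' y)
    (fun r x y => Phi_smul3 m r x₁ y₁ x y)
    (fun x y y' => Phi_add4 m x₁ y₁ x y y')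
    (fun r x y => Phi_smul4 m r x₁ y₁ x y)
    (fun z => Phi_alt_right m x₁ y₁ z)

variable (R M) in
/-- Alternating in the first pair, valued in lifted maps. -/
noncomputable def A2 (m : ℕ) :
    M [⋀^Fin 2]→ₗ[R] ((⋀[R]^2 M) →ₗ[R]
      (SymPow R 2 (SymPow R m M) →ₗ[R] SymPow R 2 (SymPow R (m + 2) M))) :=
  altOfPair (fun x₁ y₁ => altLift R (A1 R M m x₁ y₁))
    (fun x x' y => by
      have h : A1 R M m (x + x') y = A1 R M m x y + A1 R M m x' y :=
        AlternatingMap.ext fun v => by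
          simp [A1, Phi_add1]
      rw [h, altLift_add])
    (fun r x y => by
      have h : A1 R M m (r • x) y = r • A1 R M m x y :=
        AlternatingMap.ext fun v => by
          simp [A1, Phi_smul1]
      rw [h, altLift_smul])
    (fun x y y' => by
      have h : A1 R M m x (y + y') = A1 R M m x y + A1 R M m x y' :=
        AlternatingMap.ext fun v => by
          simp [A1, Phi_add2]
      rw [h, altLift_add])
    (fun r x y => by
      have h : A1 R M m x (r • y) = r • A1 R M m x y :=
        AlternatingMap.ext fun v => by
          simp [A1, Phi_smul2]
      rw [h, altLift_smul])
    (fun z => by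
      have h : A1 R M m z z = 0 :=
        AlternatingMap.ext fun v => by
          simp [A1, Phi_alt_left]
      rw [h, altLift_zero])

variable (R M) in
/-- The bilinear map on the second exterior power. -/
noncomputable def Wmap (m : ℕ) : (⋀[R]^2 M) →ₗ[R] (⋀[R]^2 M) →ₗ[R]
    (SymPow R 2 (SymPow R m M) →ₗ[R] SymPow R 2 (SymPow R (m + 2) M)) :=
  altLift R (A2 R M m)

lemma Wmap_wedge (m : ℕ) (x₁ y₁ x₂ y₂ : M) :
    Wmap R M m (wedgeMk R ![x₁, y₁]) (wedgeMk R ![x₂, y₂]) = Phi R M m x₁ y₁ x₂ y₂ := by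
  rw [Wmap, altLift_wedge]
  show altLift R (A1 R M m x₁ y₁) (wedgeMk R ![x₂, y₂]) = _
  rw [altLift_wedge]
  rfl

lemma Wmap_symm (m : ℕ) (w₁ w₂ : ⋀[R]^2 M) : Wmap R M m w₁ w₂ = Wmap R M m w₂ w₁ := by
  have h : Wmap R M m = (Wmap R M m).flip := by
    apply expow_hom_ext
    intro v
    apply expow_hom_ext
    intro v'
    rw [LinearMap.flip_apply, pair_eq v, pair_eq v', Wmap_wedge, Wmap_wedge, Phi_comm]
  conv_lhs => rw [h]
  rw [LinearMap.flip_apply]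

variable (R M) in
/-- The bilinear map underlying `i`. -/
noncomputable def betaMap (m : ℕ) : SymPow R 2 (⋀[R]^2 M) →ₗ[R]
    (SymPow R 2 (SymPow R m M) →ₗ[R] SymPow R 2 (SymPow R (m + 2) M)) :=
  lift₂ (Wmap R M m) (Wmap_symm m)

variable (R M) in
/-- The map `i`. -/
noncomputable def iMap (m : ℕ) : (SymPow R 2 (⋀[R]^2 M)) ⊗[R] (SymPow R 2 (SymPow R m M)) →ₗ[R]
    SymPow R 2 (SymPow R (m + 2) M) :=
  TensorProduct.lift (betaMap R M m)

lemma iMap_apply (m : ℕ) (x₁ y₁ x₂ y₂ : M) (a c : Fin m → M) :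
    iMap R M m ((SymPow.prod R ![wedgeMk R ![x₁, y₁], wedgeMk R ![x₂, y₂]]) ⊗ₜ[R]
        (SymPow.prod R ![SymPow.prod R a, SymPow.prod R c])) =
      SymPow.prod R ![SymPow.prod R (Fin.cons x₁ (Fin.cons y₂ a)),
          SymPow.prod R (Fin.cons x₂ (Fin.cons y₁ c))]
        + SymPow.prod R ![SymPow.prod R (Fin.cons x₂ (Fin.cons y₁ a)),
            SymPow.prod R (Fin.cons x₁ (Fin.cons y₂ c))]
        - SymPow.prod R ![SymPow.prod R (Fin.cons x₁ (Fin.cons x₂ a)),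
            SymPow.prod R (Fin.cons y₁ (Fin.cons y₂ c))]
        - SymPow.prod R ![SymPow.prod R (Fin.cons y₁ (Fin.cons y₂ a)),
            SymPow.prod R (Fin.cons x₁ (Fin.cons x₂ c))] := by
  rw [iMap, TensorProduct.lift.tmul,
    show (SymPow.prod R ![wedgeMk R ![x₁, y₁], wedgeMk R ![x₂, y₂]])
      = mul₂ (wedgeMk R ![x₁, y₁]) (wedgeMk R ![x₂, y₂]) from rfl,
    show (SymPow.prod R ![SymPow.prod R a, SymPow.prod R c])
      = mul₂ (SymPow.prod R a) (SymPow.prod R c) from rfl,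
    betaMap, lift₂_mul₂, Wmap_wedge, Phi_mul₂, Bmap_apply]
  simp only [mulC_prod, mul₂_apply]

end Aux6
section Aux7

variable {R : Type*} [CommRing R] {M : Type*} [AddCommGroup M] [Module R M]

open SymPow

lemma cons_cons_apply {k : ℕ} (u v : M) (a : Fin k → M) (j : Fin (k + 2)) :
    (Fin.cons u (Fin.cons v a) : Fin (k + 2) → M) j =
      if _ : (j : ℕ) = 0 then u
      else if _ : (j : ℕ) = 1 then v
      else a ⟨(j : ℕ) - 2, by omega⟩ := by
  rcases j with ⟨j, hj⟩
  rcases j with _ | _ | l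
  · rfl
  · rfl
  · rw [dif_neg (by simp), dif_neg (by simp)]
    have hl1 : l + 1 < k + 1 := by omega
    have hl : l < k := by omega
    trans (Fin.cons v a : Fin (k + 1) → M) ⟨l + 1, hl1⟩
    · exact Fin.cons_succ (α := fun _ : Fin (k + 2) => M) u (Fin.cons v a) ⟨l + 1, hl1⟩
    trans a ⟨l, hl⟩
    · exact Fin.cons_succ (α := fun _ : Fin (k + 1) => M) v a ⟨l, hl⟩
    · rfl

lemma append_apply {k l : ℕ} (a : Fin k → M) (b : Fin l → M) (j : Fin (k + l)) :
    Fin.append a b j =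
      if h : (j : ℕ) < k then a ⟨j, h⟩ else b ⟨(j : ℕ) - k, by omega⟩ := by
  rcases j with ⟨j, hj⟩
  by_cases h : j < k
  · rw [dif_pos h]
    exact Fin.append_left a b ⟨j, h⟩
  · rw [dif_neg h]
    have h2 := Fin.append_right a b (⟨j - k, by omega⟩ : Fin l)
    rw [← h2]
    congr 1
    exact Fin.ext (by simp [Fin.natAdd]; omega)

lemma big_eval {m : ℕ} (p q r s : M) (a c : Fin m → M) (j : Fin (m + 2 + (m + 2))) :
    Fin.append (Fin.cons p (Fin.cons q a)) (Fin.cons r (Fin.cons s c)) j =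
      if _ : (j : ℕ) = 0 then p
      else if _ : (j : ℕ) = 1 then q
      else if h : (j : ℕ) < m + 2 then a ⟨(j : ℕ) - 2, by omega⟩
      else if _ : (j : ℕ) = m + 2 then r
      else if _ : (j : ℕ) = m + 3 then s
      else c ⟨(j : ℕ) - (m + 2) - 2, by omega⟩ := by
  rw [append_apply]
  by_cases h : (j : ℕ) < m + 2
  · rw [dif_pos h, cons_cons_apply]
    show (if _ : (j : ℕ) = 0 then p
      else if _ : (j : ℕ) = 1 then q
      else a ⟨(j : ℕ) - 2, by omega⟩) = _
    split_ifs <;> first | rfl | omega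
  · rw [dif_neg h, cons_cons_apply]
    show (if _ : (j : ℕ) - (m + 2) = 0 then r
      else if _ : (j : ℕ) - (m + 2) = 1 then s
      else c ⟨(j : ℕ) - (m + 2) - 2, by omega⟩) = _
    split_ifs <;> first | rfl | omega | (congr 1; exact Fin.ext (by omega))

lemma swap_mul_val {n : ℕ} (i1 i2 i3 : Fin n) (h12 : i1 ≠ i2) (h13 : i1 ≠ i3) (h23 : i2 ≠ i3)
    (j : Fin n) :
    (((Equiv.swap i1 i2 * Equiv.swap i2 i3) j : Fin n) : ℕ) =
      if (j : ℕ) = (i1 : ℕ) then (i2 : ℕ)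
      else if (j : ℕ) = (i2 : ℕ) then (i3 : ℕ)
      else if (j : ℕ) = (i3 : ℕ) then (i1 : ℕ)
      else (j : ℕ) := by
  rw [Equiv.Perm.mul_apply]
  rcases eq_or_ne j i1 with hj | hj
  · subst hj
    rw [Equiv.swap_apply_of_ne_of_ne h12 h13, Equiv.swap_apply_left, if_pos rfl]
  · rcases eq_or_ne j i2 with hj2 | hj2
    · subst hj2
      rw [Equiv.swap_apply_left, Equiv.swap_apply_of_ne_of_ne (Ne.symm h13) (Ne.symm h23),
        if_neg (by simp [Fin.ext_iff] at hj ⊢; omega), if_pos rfl]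
    · rcases eq_or_ne j i3 with hj3 | hj3
      · subst hj3
        rw [Equiv.swap_apply_right, Equiv.swap_apply_right,
          if_neg (by simp [Fin.ext_iff] at hj ⊢; omega),
          if_neg (by simp [Fin.ext_iff] at hj2 ⊢; omega), if_pos rfl]
      · rw [Equiv.swap_apply_of_ne_of_ne hj2 hj3,
          Equiv.swap_apply_of_ne_of_ne hj hj2,
          if_neg (by simp [Fin.ext_iff] at hj ⊢; omega),
          if_neg (by simp [Fin.ext_iff] at hj2 ⊢; omega),
          if_neg (by simp [Fin.ext_iff] at hj3 ⊢; omega)]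

lemma key_cycle {n : ℕ} (n1 n2 n3 : ℕ) (h1 : n1 < n) (h2 : n2 < n) (h3 : n3 < n)
    (h12 : n1 ≠ n2) (h13 : n1 ≠ n3) (h23 : n2 ≠ n3) (v w : Fin n → M)
    (hvw : ∀ (jv jw : Fin n),
      ((jw : ℕ) = if (jv : ℕ) = n1 then n2
        else if (jv : ℕ) = n2 then n3
        else if (jv : ℕ) = n3 then n1
        else (jv : ℕ)) → v jv = w jw) :
    SymPow.prod R v = SymPow.prod R w := by
  have e12 : (⟨n1, h1⟩ : Fin n) ≠ ⟨n2, h2⟩ := fun hc => h12 (congrArg Fin.val hc)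
  have e13 : (⟨n1, h1⟩ : Fin n) ≠ ⟨n3, h3⟩ := fun hc => h13 (congrArg Fin.val hc)
  have e23 : (⟨n2, h2⟩ : Fin n) ≠ ⟨n3, h3⟩ := fun hc => h23 (congrArg Fin.val hc)
  have hfun : v = w ∘ (Equiv.swap (⟨n1, h1⟩ : Fin n) ⟨n2, h2⟩
      * Equiv.swap (⟨n2, h2⟩ : Fin n) ⟨n3, h3⟩) := by
    funext j
    exact hvw j _ (swap_mul_val ⟨n1, h1⟩ ⟨n2, h2⟩ ⟨n3, h3⟩ e12 e13 e23 j)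
  rw [hfun, prod_comp_perm]

lemma key1 {m : ℕ} (x₁ y₁ x₂ y₂ : M) (a c : Fin m → M) :
    SymPow.prod R (Fin.append (Fin.cons x₁ (Fin.cons x₂ a)) (Fin.cons y₁ (Fin.cons y₂ c))) =
      SymPow.prod R (Fin.append (Fin.cons x₁ (Fin.cons y₂ a)) (Fin.cons x₂ (Fin.cons y₁ c))) := by
  apply key_cycle 1 (m + 2) (m + 3) (by omega) (by omega) (by omega)
    (by omega) (by omega) (by omega)
  intro jv jw hw
  rw [big_eval, big_eval]
  split_ifs at hw ⊢ <;>
    first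
      | rfl
      | omega
      | (congr 1; simp only [Fin.mk.injEq]; omega)

lemma key2 {m : ℕ} (x₁ y₁ x₂ y₂ : M) (a c : Fin m → M) :
    SymPow.prod R (Fin.append (Fin.cons y₁ (Fin.cons y₂ a)) (Fin.cons x₁ (Fin.cons x₂ c))) =
      SymPow.prod R (Fin.append (Fin.cons x₂ (Fin.cons y₁ a)) (Fin.cons x₁ (Fin.cons y₂ c))) := by
  apply key_cycle 0 1 (m + 3) (by omega) (by omega) (by omega)
    (by omega) (by omega) (by omega)
  intro jv jw hw
  rw [big_eval, big_eval]
  split_ifs at hw ⊢ <;>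
    first
      | rfl
      | omega
      | (congr 1; simp only [Fin.mk.injEq]; omega)

end Aux7

section Final

variable {R : Type*} [CommRing R] {M : Type*} [AddCommGroup M] [Module R M]

open SymPow

lemma qPhi (m : ℕ) (q : SymPow R 2 (SymPow R (m + 2) M) →ₗ[R] SymPow R ((m + 2) + (m + 2)) M)
    (hq : ∀ a c : Fin (m + 2) → M,
      q (SymPow.prod R ![SymPow.prod R a, SymPow.prod R c]) = SymPow.prod R (Fin.append a c))
    (x₁ y₁ x₂ y₂ : M) : q ∘ₗ Phi R M m x₁ y₁ x₂ y₂ = 0 := by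
  suffices hE : LinearMap.compr₂ (mul₂ (R := R) (N := SymPow R m M))
      (q ∘ₗ Phi R M m x₁ y₁ x₂ y₂) = 0 by
    apply hom_ext₂
    intro p p'
    have h := LinearMap.congr_fun (LinearMap.congr_fun hE p) p'
    simpa only [LinearMap.compr₂_apply, LinearMap.comp_apply, LinearMap.zero_apply,
      LinearMap.map_zero] using h
  apply hom_ext
  intro a
  apply hom_ext
  intro c
  simp only [LinearMap.compr₂_apply, LinearMap.comp_apply, LinearMap.zero_apply]
  rw [show SymPow.prod R a = SymPow.mk R m M (PiTensorProduct.tprod R a) from rfl,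
    show SymPow.prod R c = SymPow.mk R m M (PiTensorProduct.tprod R c) from rfl]
  rw [show (mul₂ (SymPow.mk R m M (PiTensorProduct.tprod R a))
      (SymPow.mk R m M (PiTensorProduct.tprod R c)))
    = mul₂ (SymPow.prod R a) (SymPow.prod R c) from rfl]
  rw [Phi_mul₂, Bmap_apply]
  simp only [mulC_prod]
  rw [map_sub, map_sub, map_add]
  simp only [mul₂_apply, hq]
  rw [key1 x₁ y₁ x₂ y₂ a c, key2 x₁ y₁ x₂ y₂ a c]
  abel

lemma q_comp_iMap (m : ℕ)
    (q : SymPow R 2 (SymPow R (m + 2) M) →ₗ[R] SymPow R ((m + 2) + (m + 2)) M)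
    (hq : ∀ a c : Fin (m + 2) → M,
      q (SymPow.prod R ![SymPow.prod R a, SymPow.prod R c]) = SymPow.prod R (Fin.append a c)) :
    q ∘ₗ iMap R M m = 0 := by
  have hE : LinearMap.compr₂ (mul₂ (R := R) (N := (⋀[R]^2 M)))
      (LinearMap.compr₂ (betaMap R M m) q) = 0 := by
    apply expow_hom_ext
    intro v
    apply expow_hom_ext
    intro v'
    rw [LinearMap.zero_apply, LinearMap.zero_apply]
    have hgoal : (LinearMap.compr₂ (mul₂ (R := R) (N := (⋀[R]^2 M)))
        (LinearMap.compr₂ (betaMap R M m) q)) (wedgeMk R v) (wedgeMk R v')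
        = q ∘ₗ Phi R M m (v 0) (v 1) (v' 0) (v' 1) := by
      apply LinearMap.ext
      intro t
      rw [LinearMap.compr₂_apply, LinearMap.compr₂_apply, LinearMap.comp_apply]
      congr 1
      rw [betaMap, lift₂_mul₂]
      conv_lhs => rw [pair_eq v, pair_eq v']
      rw [Wmap_wedge]
    rw [hgoal, qPhi m q hq]
  have hD : LinearMap.compr₂ (betaMap R M m) q = 0 := by
    apply hom_ext₂
    intro w₁ w₂
    have h := LinearMap.congr_fun (LinearMap.congr_fun hE w₁) w₂
    simpa only [LinearMap.compr₂_apply, LinearMap.zero_apply, LinearMap.map_zero] using h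
  apply TensorProduct.ext'
  intro s t
  rw [LinearMap.comp_apply, iMap, TensorProduct.lift.tmul, LinearMap.zero_apply]
  have h := LinearMap.congr_fun (LinearMap.congr_fun hD s) t
  simpa only [LinearMap.compr₂_apply, LinearMap.zero_apply, LinearMap.map_zero] using h

end Final


theorem stmt12 {R M : Type*} [CommRing R] [AddCommGroup M] [Module R M]
    (m : ℕ) (hm : 1 ≤ m) :
    ∃ i : (SymPow R 2 (⋀[R]^2 M)) ⊗[R] (SymPow R 2 (SymPow R m M)) →ₗ[R]
        SymPow R 2 (SymPow R (m + 2) M),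
      (∀ (x₁ y₁ x₂ y₂ : M) (a c : Fin m → M),
        i ((SymPow.prod R ![wedgeMk R ![x₁, y₁], wedgeMk R ![x₂, y₂]]) ⊗ₜ[R]
            (SymPow.prod R ![SymPow.prod R a, SymPow.prod R c])) =
          SymPow.prod R ![SymPow.prod R (Fin.cons x₁ (Fin.cons y₂ a)),
              SymPow.prod R (Fin.cons x₂ (Fin.cons y₁ c))]
          + SymPow.prod R ![SymPow.prod R (Fin.cons x₂ (Fin.cons y₁ a)),
              SymPow.prod R (Fin.cons x₁ (Fin.cons y₂ c))]
          - SymPow.prod R ![SymPow.prod R (Fin.cons x₁ (Fin.cons x₂ a)),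
              SymPow.prod R (Fin.cons y₁ (Fin.cons y₂ c))]
          - SymPow.prod R ![SymPow.prod R (Fin.cons y₁ (Fin.cons y₂ a)),
              SymPow.prod R (Fin.cons x₁ (Fin.cons x₂ c))]) ∧
      ∀ q : SymPow R 2 (SymPow R (m + 2) M) →ₗ[R] SymPow R ((m + 2) + (m + 2)) M,
        (∀ a c : Fin (m + 2) → M,
          q (SymPow.prod R ![SymPow.prod R a, SymPow.prod R c]) =
            SymPow.prod R (Fin.append a c)) →
        q ∘ₗ i = 0 := by
  exact ⟨iMap R M m, fun x₁ y₁ x₂ y₂ a c => iMap_apply m x₁ y₁ x₂ y₂ a c,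
    fun q hq => q_comp_iMap m q hq⟩
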